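/- Let G be an amply regular graph with parameters (n, d, α, β) with β > α ≥ 1, and let xy ∈ E. Then the transport-bipartite graph H of xy is (β-1)-regular. -/

import Mathlib

variable {V : Type*}

/-- An amply regular graph with parameters `(n, d, a, b)`. -/
def IsAmplyRegular (G : SimpleGraph V) [Fintype V] [DecidableEq V] [DecidableRel G.Adj]
    (n d a b : ℕ) : Prop :=
  Fintype.card V = n ∧ G.IsRegularOfDegree d ∧
  (∀ x y : V, G.Adj x y → (G.neighborFinset x ∩ G.neighborFinset y).card = a) ∧
  (∀ x y : V, G.dist x y = 2 → (G.neighborFinset x ∩ G.neighborFinset y).card = b)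

/-- `N_x = Γ(x) \\ ({y} ∪ Γ(y))`: the neighbors of `x` other than `y` and not adjacent
to `y`. (`N_y` is `Nside G y x`.) -/
def Nside (G : SimpleGraph V) [Fintype V] [DecidableEq V] [DecidableRel G.Adj] (x y : V) :
    Finset V := G.neighborFinset x \ insert y (G.neighborFinset y)

/-- `Δ_{xy} = Γ(x) ∩ Γ(y)`: the common neighbors of `x` and `y`. -/
def Delta (G : SimpleGraph V) [Fintype V] [DecidableEq V] [DecidableRel G.Adj] (x y : V) :
    Finset V := G.neighborFinset x ∩ G.neighborFinset y

/-- The `X`-side of the transport-bipartite graph of the edge `xy`: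
`N_x ∪ Δ_{xy}` together with `m = β - α - 1` copies `x_1, …, x_m` of `x`. -/
abbrev TBX (G : SimpleGraph V) [Fintype V] [DecidableEq V] [DecidableRel G.Adj]
    (x y : V) (m : ℕ) :=
  {v : V // v ∈ Nside G x y ∪ Delta G x y} ⊕ Fin m

/-- The `Y`-side of the transport-bipartite graph of the edge `xy`:
`N_y ∪ Δ'_{xy}` together with `m = β - α - 1` copies `x'_1, …, x'_m` of `x`,
where `Δ'_{xy}` is a primed copy of `Δ_{xy}`. -/
abbrev TBY (G : SimpleGraph V) [Fintype V] [DecidableEq V] [DecidableRel G.Adj]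
    (x y : V) (m : ℕ) :=
  {v : V // v ∈ Nside G y x ∪ Delta G x y} ⊕ Fin m

/-- The edges of the transport-bipartite graph, from the `X`-side to the `Y`-side:
`E_1`-`E_3` and `E_5` are edges of `G` between `N_x ∪ Δ_{xy}` and `N_y ∪ Δ'_{xy}`;
`E_4` joins `z_i` to its primed copy `z'_i`; `E_6`-`E_8` join the copies of `x` to
everything in `Δ'_{xy}`, `Δ_{xy}` and the other copies respectively. -/
def tbAux (G : SimpleGraph V) [Fintype V] [DecidableEq V] [DecidableRel G.Adj]
    (x y : V) (m : ℕ) (a : TBX G x y m) (b : TBY G x y m) : Prop :=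
  match a, b with
  | Sum.inl v, Sum.inl w => G.Adj v.1 w.1 ∨ v.1 = w.1
  | Sum.inl v, Sum.inr _ => v.1 ∈ Delta G x y
  | Sum.inr _, Sum.inl w => w.1 ∈ Delta G x y
  | Sum.inr _, Sum.inr _ => True

/-- The transport-bipartite graph `H` of the edge `xy` (Definition 3.1). -/
def TBGraph (G : SimpleGraph V) [Fintype V] [DecidableEq V] [DecidableRel G.Adj]
    (x y : V) (m : ℕ) : SimpleGraph (TBX G x y m ⊕ TBY G x y m) where
  Adj a b := match a, b with
    | Sum.inl a, Sum.inr b => tbAux G x y m a b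
    | Sum.inr b, Sum.inl a => tbAux G x y m a b
    | _, _ => False
  symm := ⟨by rintro (a | a) (b | b) h <;> first | exact h | exact h.elim⟩
  loopless := ⟨by rintro (a | a) h <;> exact h⟩

noncomputable instance (G : SimpleGraph V) [Fintype V] [DecidableEq V] [DecidableRel G.Adj]
    (x y : V) (m : ℕ) (a : TBX G x y m ⊕ TBY G x y m) :
    Fintype ((TBGraph G x y m).neighborSet a) := Fintype.ofFinite _


section auxlemmas
variable [Fintype V] [DecidableEq V] (G : SimpleGraph V) [DecidableRel G.Adj]

lemma Delta_comm (x y : V) : Delta G y x = Delta G x y := Finset.inter_comm _ _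

lemma union_eq {x y : V} (hxy : G.Adj x y) :
    Nside G y x ∪ Delta G x y = G.neighborFinset y \ {x} := by
  ext w
  simp only [Nside, Delta, Finset.mem_union, Finset.mem_sdiff, Finset.mem_insert,
    Finset.mem_inter, SimpleGraph.mem_neighborFinset, Finset.mem_singleton]
  constructor
  · rintro (⟨h1, h2⟩ | ⟨h1, h2⟩)
    · exact ⟨h1, fun hw => h2 (Or.inl hw)⟩
    · exact ⟨h2, fun hw => G.loopless.irrefl x (hw ▸ h1)⟩
  · rintro ⟨h1, h2⟩
    by_cases hx : G.Adj x w
    · exact Or.inr ⟨hx, h1⟩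
    · exact Or.inl ⟨h1, fun hw => hw.elim h2 hx⟩

lemma key_count {α β : ℕ}
    (hcα : ∀ x y : V, G.Adj x y → (G.neighborFinset x ∩ G.neighborFinset y).card = α)
    (hcβ : ∀ x y : V, G.dist x y = 2 → (G.neighborFinset x ∩ G.neighborFinset y).card = β)
    (hβα : α < β) (hα : 1 ≤ α)
    {x y v : V} (hxy : G.Adj x y) (hv : v ∈ Nside G x y ∪ Delta G x y) :
    ((G.neighborFinset y \ {x}).filter (fun w => G.Adj v w ∨ v = w)).card
      + (if v ∈ Delta G x y then β - α - 1 else 0) = β - 1 := by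
  rw [Finset.mem_union] at hv
  rcases hv with hv | hv
  · simp only [Nside, Finset.mem_sdiff, Finset.mem_insert, SimpleGraph.mem_neighborFinset,
      not_or] at hv
    obtain ⟨hxv, hvy, hyv⟩ := hv
    have hvD : v ∉ Delta G x y := by
      simp only [Delta, Finset.mem_inter, SimpleGraph.mem_neighborFinset]
      tauto
    have hdist : G.dist v y = 2 := by
      have hle : G.dist v y ≤ 2 := SimpleGraph.dist_le (hxv.symm.toWalk.append hxy.toWalk)
      have h0 : G.dist v y ≠ 0 := by
        intro hh
        rw [SimpleGraph.dist_eq_zero_iff_eq_or_not_reachable] at hh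
        exact hh.elim hvy fun hr => hr ⟨hxv.symm.toWalk.append hxy.toWalk⟩
      have h1 : G.dist v y ≠ 1 := fun hh =>
        hyv ((SimpleGraph.dist_eq_one_iff_adj.mp hh).symm)
      omega
    have hcard := hcβ v y hdist
    have hfil : (G.neighborFinset y \ {x}).filter (fun w => G.Adj v w ∨ v = w)
        = (G.neighborFinset v ∩ G.neighborFinset y).erase x := by
      ext w
      simp only [Finset.mem_filter, Finset.mem_sdiff, Finset.mem_singleton, Finset.mem_erase,
        Finset.mem_inter, SimpleGraph.mem_neighborFinset]
      constructor
      · rintro ⟨⟨h1, h2⟩, h3 | h3⟩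
        · exact ⟨h2, h3, h1⟩
        · exact absurd (h3 ▸ h1) hyv
      · rintro ⟨h1, h2, h3⟩
        exact ⟨⟨h3, h1⟩, Or.inl h2⟩
    have hxmem : x ∈ G.neighborFinset v ∩ G.neighborFinset y := by
      simp only [Finset.mem_inter, SimpleGraph.mem_neighborFinset]
      exact ⟨hxv.symm, hxy.symm⟩
    rw [hfil, Finset.card_erase_of_mem hxmem, hcard, if_neg hvD, Nat.add_zero]
  · have hvD := hv
    simp only [Delta, Finset.mem_inter, SimpleGraph.mem_neighborFinset] at hv
    obtain ⟨hxv, hyv⟩ := hv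
    have hcard := hcα v y hyv.symm
    have hfil : (G.neighborFinset y \ {x}).filter (fun w => G.Adj v w ∨ v = w)
        = insert v ((G.neighborFinset v ∩ G.neighborFinset y).erase x) := by
      ext w
      simp only [Finset.mem_filter, Finset.mem_sdiff, Finset.mem_singleton, Finset.mem_insert,
        Finset.mem_erase, Finset.mem_inter, SimpleGraph.mem_neighborFinset]
      constructor
      · rintro ⟨⟨h1, h2⟩, h3 | h3⟩
        · exact Or.inr ⟨h2, h3, h1⟩
        · exact Or.inl h3.symm
      · rintro (rfl | ⟨h1, h2, h3⟩)
        · exact ⟨⟨hyv, fun hx => G.loopless.irrefl x (hx ▸ hxv)⟩, Or.inr rfl⟩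
        · exact ⟨⟨h3, h1⟩, Or.inl h2⟩
    have hxmem : x ∈ G.neighborFinset v ∩ G.neighborFinset y := by
      simp only [Finset.mem_inter, SimpleGraph.mem_neighborFinset]
      exact ⟨hxv.symm, hxy.symm⟩
    have hvnot : v ∉ (G.neighborFinset v ∩ G.neighborFinset y).erase x := by
      simp [SimpleGraph.mem_neighborFinset]
    rw [hfil, Finset.card_insert_of_notMem hvnot, Finset.card_erase_of_mem hxmem, hcard,
      if_pos hvD]
    omega

def nbr_left (x y : V) (m : ℕ) (a : TBX G x y m) :
    (TBGraph G x y m).neighborSet (Sum.inl a) ≃ {c : TBY G x y m // tbAux G x y m a c} where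
  toFun b := match b with
    | ⟨Sum.inr c, hc⟩ => ⟨c, hc⟩
    | ⟨Sum.inl _, hc⟩ => (hc : False).elim
  invFun c := ⟨Sum.inr c.1, c.2⟩
  left_inv b := match b with
    | ⟨Sum.inr _, _⟩ => rfl
  right_inv c := rfl

def nbr_right (x y : V) (m : ℕ) (b : TBY G x y m) :
    (TBGraph G x y m).neighborSet (Sum.inr b) ≃ {a : TBX G x y m // tbAux G x y m a b} where
  toFun a := match a with
    | ⟨Sum.inl c, hc⟩ => ⟨c, hc⟩
    | ⟨Sum.inr _, hc⟩ => (hc : False).elim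
  invFun c := ⟨Sum.inl c.1, c.2⟩
  left_inv a := match a with
    | ⟨Sum.inl _, _⟩ => rfl
  right_inv c := rfl

lemma card_side (s : Finset V) (P : V → Prop) [DecidablePred P] (c : Prop) [Decidable c]
    (m : ℕ) :
    Nat.card ({w : {u : V // u ∈ s} // P w.1} ⊕ {j : Fin m // c})
      = (s.filter P).card + (if c then m else 0) := by
  rw [Nat.card_sum]
  congr 1
  · rw [Nat.card_congr (Equiv.subtypeSubtypeEquivSubtypeInter _ _), Nat.card_eq_fintype_card,
      Fintype.card_subtype]
    congr 1
    ext u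
    simp
  · by_cases hc : c
    · rw [if_pos hc, Nat.card_congr (Equiv.subtypeUnivEquiv fun _ => hc),
        Nat.card_eq_fintype_card, Fintype.card_fin]
    · haveI : IsEmpty {j : Fin m // c} := ⟨fun j => hc j.2⟩
      rw [if_neg hc, Nat.card_of_isEmpty]

lemma delta_filter (s : Finset V) (x y : V) (hs : Delta G x y ⊆ s) :
    s.filter (· ∈ Delta G x y) = Delta G x y := by
  rw [Finset.filter_mem_eq_inter, Finset.inter_eq_right.mpr hs]

end auxlemmas

set_option maxHeartbeats 800000

/-- The transport-bipartite graph of an edge of an amply regular graph with `β > α ≥ 1`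
is `(β - 1)`-regular. -/
theorem stmt5 [Fintype V] [DecidableEq V] (G : SimpleGraph V) [DecidableRel G.Adj]
    (n d α β : ℕ) (h : IsAmplyRegular G n d α β) (hβα : α < β) (hα : 1 ≤ α)
    (x y : V) (hxy : G.Adj x y) :
    (TBGraph G x y (β - α - 1)).IsRegularOfDegree (β - 1) := by
  classical
  obtain ⟨-, -, hcα, hcβ⟩ := h
  have hDelta : (Delta G x y).card = α := hcα x y hxy
  intro a
  rw [← SimpleGraph.card_neighborSet_eq_degree, ← Nat.card_eq_fintype_card]
  rcases a with (v | i) | (w | j)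
  · calc Nat.card ((TBGraph G x y (β - α - 1)).neighborSet (Sum.inl (Sum.inl v)))
        = Nat.card ({w : {u : V // u ∈ Nside G y x ∪ Delta G x y} //
            G.Adj v.1 w.1 ∨ v.1 = w.1} ⊕ {j : Fin (β - α - 1) // v.1 ∈ Delta G x y}) :=
          Nat.card_congr ((nbr_left G x y _ (Sum.inl v)).trans
            (Equiv.subtypeSum.trans (Equiv.sumCongr
              (Equiv.subtypeEquivRight fun _ => Iff.rfl)
              (Equiv.subtypeEquivRight fun _ => Iff.rfl))))
      _ = ((Nside G y x ∪ Delta G x y).filter (fun u => G.Adj v.1 u ∨ v.1 = u)).card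
            + (if v.1 ∈ Delta G x y then β - α - 1 else 0) :=
          card_side (Nside G y x ∪ Delta G x y) (fun u => G.Adj v.1 u ∨ v.1 = u)
            (v.1 ∈ Delta G x y) (β - α - 1)
      _ = β - 1 := by
          rw [union_eq G hxy]
          exact key_count G hcα hcβ hβα hα hxy v.2
  · calc Nat.card ((TBGraph G x y (β - α - 1)).neighborSet (Sum.inl (Sum.inr i)))
        = Nat.card ({w : {u : V // u ∈ Nside G y x ∪ Delta G x y} //
            w.1 ∈ Delta G x y} ⊕ {j : Fin (β - α - 1) // True}) :=
          Nat.card_congr ((nbr_left G x y _ (Sum.inr i)).trans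
            (Equiv.subtypeSum.trans (Equiv.sumCongr
              (Equiv.subtypeEquivRight fun _ => Iff.rfl)
              (Equiv.subtypeEquivRight fun _ => Iff.rfl))))
      _ = ((Nside G y x ∪ Delta G x y).filter (· ∈ Delta G x y)).card
            + (if True then β - α - 1 else 0) :=
          card_side (Nside G y x ∪ Delta G x y) (· ∈ Delta G x y) True (β - α - 1)
      _ = β - 1 := by
          rw [delta_filter G _ x y Finset.subset_union_right, hDelta, if_pos trivial]
          omega
  · calc Nat.card ((TBGraph G x y (β - α - 1)).neighborSet (Sum.inr (Sum.inl w)))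
        = Nat.card ({v : {u : V // u ∈ Nside G x y ∪ Delta G x y} //
            G.Adj v.1 w.1 ∨ v.1 = w.1} ⊕ {i : Fin (β - α - 1) // w.1 ∈ Delta G x y}) :=
          Nat.card_congr ((nbr_right G x y _ (Sum.inl w)).trans
            (Equiv.subtypeSum.trans (Equiv.sumCongr
              (Equiv.subtypeEquivRight fun _ => Iff.rfl)
              (Equiv.subtypeEquivRight fun _ => Iff.rfl))))
      _ = ((Nside G x y ∪ Delta G x y).filter (fun u => G.Adj u w.1 ∨ u = w.1)).card
            + (if w.1 ∈ Delta G x y then β - α - 1 else 0) :=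
          card_side (Nside G x y ∪ Delta G x y) (fun u => G.Adj u w.1 ∨ u = w.1)
            (w.1 ∈ Delta G x y) (β - α - 1)
      _ = β - 1 := by
          have hw2 : w.1 ∈ Nside G y x ∪ Delta G y x := by
            rw [Delta_comm]; exact w.2
          have h2 := key_count G hcα hcβ hβα hα hxy.symm hw2
          have hfc : (Nside G x y ∪ Delta G x y).filter (fun u => G.Adj u w.1 ∨ u = w.1)
              = (Nside G x y ∪ Delta G x y).filter (fun u => G.Adj w.1 u ∨ w.1 = u) :=
            Finset.filter_congr (fun u _ => or_congr (G.adj_comm u w.1) eq_comm)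
          have hun : Nside G x y ∪ Delta G x y = G.neighborFinset x \ {y} := by
            rw [← Delta_comm G x y]; exact union_eq G hxy.symm
          rw [hfc, hun]
          simp only [Delta_comm G x y] at h2
          exact h2
  · calc Nat.card ((TBGraph G x y (β - α - 1)).neighborSet (Sum.inr (Sum.inr j)))
        = Nat.card ({v : {u : V // u ∈ Nside G x y ∪ Delta G x y} //
            v.1 ∈ Delta G x y} ⊕ {i : Fin (β - α - 1) // True}) :=
          Nat.card_congr ((nbr_right G x y _ (Sum.inr j)).trans
            (Equiv.subtypeSum.trans (Equiv.sumCongr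
              (Equiv.subtypeEquivRight fun _ => Iff.rfl)
              (Equiv.subtypeEquivRight fun _ => Iff.rfl))))
      _ = ((Nside G x y ∪ Delta G x y).filter (· ∈ Delta G x y)).card
            + (if True then β - α - 1 else 0) :=
          card_side (Nside G x y ∪ Delta G x y) (· ∈ Delta G x y) True (β - α - 1)
      _ = β - 1 := by
          rw [delta_filter G _ x y Finset.subset_union_right, hDelta, if_pos trivial]
          omega
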